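/- arXiv:1906.01394 — 2 statements merged into one kernel-verified Lean document; each statement's English description precedes it below -/
import Mathlib

section
/- Every rank-two entangled Bell-diagonal state (p₂ = p₃ = 0, 1/2 < p₀ < 1, p₁ = 1 - p₀ > 0) has strictly positive fidelity deviation Δ = (2/(3√5))(1 - p₀), and as p₀ → 1/2⁺, F = (2/3)(1/2 + p₀) → 2/3⁺ while Δ → 1/(3√5)⁻. -/
open Filter Topology

/-- Rank-two entangled Bell-diagonal states (`p₂ = p₃ = 0`, `1/2 < p₀ < 1`,
`p₁ = 1 - p₀`) have strictly positive deviation `Δ = (2/(3√5))(1-p₀)`, with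
`Δ = (2/(3√10))√(2(1-p₀)²)`, and as `p₀ → 1/2⁺` the fidelity
`(2/3)(1/2+p₀) → 2/3` while `Δ → 1/(3√5)`. -/
theorem rank_two_bell_diagonal_deviation :
    (∀ p₀ : ℝ, 1 / 2 < p₀ → p₀ < 1 →
      (2 / (3 * Real.sqrt 10)) * Real.sqrt (2 * (1 - p₀) ^ 2)
          = (2 / (3 * Real.sqrt 5)) * (1 - p₀) ∧
        0 < (2 / (3 * Real.sqrt 5)) * (1 - p₀)) ∧
    Tendsto (fun p₀ : ℝ => (2 / 3) * (1 / 2 + p₀)) (𝓝[>] (1 / 2)) (𝓝 (2 / 3)) ∧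
    Tendsto (fun p₀ : ℝ => (2 / (3 * Real.sqrt 5)) * (1 - p₀)) (𝓝[>] (1 / 2))
      (𝓝 (1 / (3 * Real.sqrt 5))) := by
  have h5 : (0:ℝ) < Real.sqrt 5 := Real.sqrt_pos.mpr (by norm_num)
  refine ⟨fun p₀ h1 h2 => ?_, ?_, ?_⟩
  · have hp : (0:ℝ) < 1 - p₀ := by linarith
    constructor
    · have : (2 : ℝ) * (1 - p₀) ^ 2 = (Real.sqrt 2 * (1 - p₀)) ^ 2 := by
        rw [mul_pow, Real.sq_sqrt (by norm_num)]
      rw [this, Real.sqrt_sq (by positivity)]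
      have h10 : Real.sqrt 10 = Real.sqrt 2 * Real.sqrt 5 := by
        rw [← Real.sqrt_mul (by norm_num)]; norm_num
      have h2p : (0:ℝ) < Real.sqrt 2 := Real.sqrt_pos.mpr (by norm_num)
      field_simp [h10]
      rw [h10]
    · positivity
  · have : Tendsto (fun p₀ : ℝ => (2 / 3) * (1 / 2 + p₀)) (𝓝 (1/2 : ℝ)) (𝓝 (2 / 3)) := by
      have := (Continuous.tendsto (by continuity : Continuous fun p₀ : ℝ => (2/3) * (1/2 + p₀)) (1/2:ℝ))
      norm_num at this ⊢
      exact this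
    exact this.mono_left nhdsWithin_le_nhds
  · have : Tendsto (fun p₀ : ℝ => (2 / (3 * Real.sqrt 5)) * (1 - p₀)) (𝓝 (1/2 : ℝ))
        (𝓝 (1 / (3 * Real.sqrt 5))) := by
      have h := (Continuous.tendsto (by continuity : Continuous fun p₀ : ℝ => (2 / (3 * Real.sqrt 5)) * (1 - p₀)) (1/2:ℝ))
      have he : (2 / (3 * Real.sqrt 5)) * (1 - 1/2) = 1 / (3 * Real.sqrt 5) := by
        field_simp; ring
      rwa [he] at h
    exact this.mono_left nhdsWithin_le_nhds
end

section
/- For real diagonal matrices with entries of prescribed signs: if t₁ ≥ t₂ ≥ t₃ ≥ 0 and two eigenvalues have λ = -1 and one has λ = +1 (det T > 0 case), then the minimum over permutations (i,j,k) of √((tᵢ-tⱼ)² + (tᵢ+t_k)² + (tⱼ+t_k)²) is attained at (i,j,k) = (1,2,3), i.e., pairing the deviation-minimizing permutation with the fidelity-maximizing one t₁ + t₂ - t₃. -/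
/-- For `t₁ ≥ t₂ ≥ t₃ ≥ 0` (the `det T > 0` case), the minimum over permutations
`(i,j,k)` of `√((tᵢ-tⱼ)² + (tᵢ+t_k)² + (tⱼ+t_k)²)` is attained at `(1,2,3)`,
i.e. at the permutation maximizing the fidelity expression `t₁ + t₂ - t₃`. -/
theorem deviation_min_at_fidelity_max (t₁ t₂ t₃ : ℝ)
    (h₁₂ : t₁ ≥ t₂) (h₂₃ : t₂ ≥ t₃) (h₃ : 0 ≤ t₃) :
    Real.sqrt ((t₁ - t₂) ^ 2 + (t₁ + t₃) ^ 2 + (t₂ + t₃) ^ 2)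
        ≤ Real.sqrt ((t₂ - t₃) ^ 2 + (t₂ + t₁) ^ 2 + (t₃ + t₁) ^ 2) ∧
    Real.sqrt ((t₁ - t₂) ^ 2 + (t₁ + t₃) ^ 2 + (t₂ + t₃) ^ 2)
        ≤ Real.sqrt ((t₁ - t₃) ^ 2 + (t₁ + t₂) ^ 2 + (t₃ + t₂) ^ 2) := by
  constructor <;> apply Real.sqrt_le_sqrt <;> nlinarith [sq_nonneg (t₁ - t₂), sq_nonneg (t₂ - t₃), mul_nonneg (sub_nonneg.2 h₂₃) h₃, mul_nonneg (sub_nonneg.2 h₁₂) h₃, mul_nonneg (le_trans h₃ h₂₃) h₃]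
end
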